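/- For every integer s ≥ 2: (i) D₁ = (4s, 0; (1, 2), (−1, 4s), (2s+1, 4s)) is a cyclic data set of degree 4s and genus s, and D₂ = (4s−4, 0; (1, 2), (1, 4s−4), (2s−3, 4s−4)) is a cyclic data set of degree 4s−4 and genus s−1; (ii) (2s+1)² ≡ 1 (mod 4s) and (2s−3)² ≡ 1 (mod 4s−4), so 2s+1 and 2s−3 are their own inverses modulo 4s and 4s−4 respectively; (iii) with n = lcm(4s, 4s−4) = 4s(s−1), one has (s−1)·(−1) + s·1 = 1 and (s−1)(2s+1) + s(2s−3) = 4s(s−1) − 1 ≡ −1 (mod n); hence the fixed points (−1, 4s) of D₁ and (1, 4s−4) of D₂ are compatible with twist factor 1, and the fixed points (2s+1, 4s) of D₁ and (2s−3, 4s−4) of D₂ are compatible with twist factor −1. -/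
import Mathlib

def IsCyclicDataSet (n g₀ g : ℕ) (C : List (ℤ × ℕ)) : Prop :=
  2 ≤ n ∧ C ≠ [] ∧
  (∀ p ∈ C, 2 ≤ p.2 ∧ p.2 ∣ n ∧ Int.gcd p.1 (p.2 : ℤ) = 1) ∧
  (∀ i < C.length,
    ((C.map Prod.snd).eraseIdx i).foldr Nat.lcm 1 = (C.map Prod.snd).foldr Nat.lcm 1) ∧
  (g₀ = 0 → (C.map Prod.snd).foldr Nat.lcm 1 = n) ∧
  ((n : ℤ) ∣ (C.map (fun p => ((n : ℤ) / (p.2 : ℤ)) * p.1)).sum) ∧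
  (2 * (g : ℤ) - 2 =
    (n : ℤ) * (2 * (g₀ : ℤ) - 2) + (C.map (fun p => (n : ℤ) - (n : ℤ) / (p.2 : ℤ))).sum)

theorem stmt_12 (s : ℕ) (hs : 2 ≤ s) :
    IsCyclicDataSet (4*s) 0 s [(1, 2), (-1, 4*s), (2*(s:ℤ) + 1, 4*s)] ∧
    IsCyclicDataSet (4*s - 4) 0 (s - 1)
      [(1, 2), (1, 4*s - 4), (2*(s:ℤ) - 3, 4*s - 4)] ∧
    (2*(s:ℤ) + 1)^2 ≡ 1 [ZMOD 4*(s:ℤ)] ∧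
    (2*(s:ℤ) - 3)^2 ≡ 1 [ZMOD 4*(s:ℤ) - 4] ∧
    Nat.lcm (4*s) (4*s - 4) = 4*s*(s - 1) ∧
    ((s:ℤ) - 1) * (-1) + (s:ℤ) * 1 = 1 ∧
    ((s:ℤ) - 1) * (-1) + (s:ℤ) * 1 ≡ 1 [ZMOD 4*(s:ℤ)*((s:ℤ) - 1)] ∧
    ((s:ℤ) - 1) * (2*(s:ℤ) + 1) + (s:ℤ) * (2*(s:ℤ) - 3) = 4*(s:ℤ)*((s:ℤ) - 1) - 1 ∧
    ((s:ℤ) - 1) * (2*(s:ℤ) + 1) + (s:ℤ) * (2*(s:ℤ) - 3)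
      ≡ -1 [ZMOD 4*(s:ℤ)*((s:ℤ) - 1)] := by
  obtain ⟨t, rfl⟩ : ∃ t, s = t + 2 := ⟨s - 2, by omega⟩
  have e2 : 4*(t+2) - 4 = 4*(t+1) := by omega
  have e3 : (t+2) - 1 = t + 1 := by omega
  rw [e2, e3]
  have hl1 : Nat.lcm 2 (4*(t+2)) = 4*(t+2) := Nat.dvd_antisymm (Nat.lcm_dvd ⟨2*(t+2), by ring⟩ dvd_rfl) (Nat.dvd_lcm_right _ _)
  have hl2 : Nat.lcm 2 (4*(t+1)) = 4*(t+1) := Nat.dvd_antisymm (Nat.lcm_dvd ⟨2*(t+1), by ring⟩ dvd_rfl) (Nat.dvd_lcm_right _ _)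
  have hd1 : (4*((t:ℤ)+2))/2 = 2*((t:ℤ)+2) := by omega
  have hd2 : (4*((t:ℤ)+1))/2 = 2*((t:ℤ)+1) := by omega
  have hs1 : (4*((t:ℤ)+2))/(4*((t:ℤ)+2)) = 1 := Int.ediv_self (by positivity)
  have hs2 : (4*((t:ℤ)+1))/(4*((t:ℤ)+1)) = 1 := Int.ediv_self (by positivity)
  refine ⟨⟨by omega, by simp, ?_, ?_, ?_, ?_, ?_⟩,
          ⟨by omega, by simp, ?_, ?_, ?_, ?_, ?_⟩, ?_, ?_, ?_, by push_cast; ring, ?_,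
          by push_cast; ring, ?_⟩
  · intro p hp
    simp only [List.mem_cons, List.not_mem_nil, or_false] at hp
    rcases hp with rfl | rfl | rfl
    · exact ⟨le_refl 2, ⟨2*(t+2), by ring⟩, by simp⟩
    · exact ⟨by omega, dvd_rfl, by simp⟩
    · refine ⟨by omega, dvd_rfl, ?_⟩
      rw [← Int.isCoprime_iff_gcd_eq_one]
      exact ⟨2*(t:ℤ)+5, -((t:ℤ)+3), by push_cast; ring⟩
  · intro i hi
    simp only [List.length_cons, List.length_nil] at hi
    interval_cases i <;>
      simp [List.eraseIdx, Nat.lcm_self, Nat.lcm_one_right, hl1]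
  · intro _
    simp [Nat.lcm_self, Nat.lcm_one_right, hl1]
  · simp only [List.map_cons, List.map_nil, List.sum_cons, List.sum_nil]
    push_cast
    rw [hd1, hs1]
    exact ⟨1, by ring⟩
  · simp only [List.map_cons, List.map_nil, List.sum_cons, List.sum_nil]
    push_cast
    rw [hd1, hs1]
    ring
  · intro p hp
    simp only [List.mem_cons, List.not_mem_nil, or_false] at hp
    rcases hp with rfl | rfl | rfl
    · exact ⟨le_refl 2, ⟨2*(t+1), by ring⟩, by simp⟩
    · exact ⟨by omega, dvd_rfl, by simp⟩
    · refine ⟨by omega, dvd_rfl, ?_⟩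
      rw [← Int.isCoprime_iff_gcd_eq_one]
      exact ⟨2*(t:ℤ)+1, -(t:ℤ), by push_cast; ring⟩
  · intro i hi
    simp only [List.length_cons, List.length_nil] at hi
    interval_cases i <;>
      simp [List.eraseIdx, Nat.lcm_self, Nat.lcm_one_right, hl2]
  · intro _
    simp [Nat.lcm_self, Nat.lcm_one_right, hl2]
  · simp only [List.map_cons, List.map_nil, List.sum_cons, List.sum_nil]
    push_cast
    rw [hd2, hs2]
    exact ⟨1, by ring⟩
  · simp only [List.map_cons, List.map_nil, List.sum_cons, List.sum_nil]
    push_cast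
    rw [hd2, hs2]
    ring
  · refine Int.modEq_iff_dvd.mpr ⟨-((t:ℤ)+3), ?_⟩
    push_cast; ring
  · refine Int.modEq_iff_dvd.mpr ⟨-(t:ℤ), ?_⟩
    push_cast; ring
  · have hc : Nat.Coprime (t+2) (t+1) := by show Nat.Coprime (t+1+1) (t+1); simp
    rw [Nat.lcm_mul_left, hc.lcm_eq_mul]; ring
  · refine Int.modEq_iff_dvd.mpr ⟨0, ?_⟩
    push_cast; ring
  · refine Int.modEq_iff_dvd.mpr ⟨-1, ?_⟩
    push_cast; ring
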